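/- Let -1 ≤ y_0 < y_1 < ... < y_M ≤ 1 be distinct real points with Lagrange basis polynomials ℓ_{j,M}, let a, b ∈ ℝ with a + b ≠ 0, and let c_0, ..., c_{M+1} ∈ ℝ. Define p(x) = Σ_{j=0}^{M} c_j·[∂_x^{-1}ℓ_{j,M}(x) - (b/(a+b))·∫_{-1}^{1} ℓ_{j,M}(t) dt] + c_{M+1}/(a+b). Then p is a polynomial of degree at most M+1 satisfying p'(y_j) = c_j for j = 0, ..., M and a·p(-1) + b·p(1) = c_{M+1}; moreover, p is the unique polynomial of degree at most M+1 with these properties. -/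

import Mathlib

open Polynomial

noncomputable def antider (p : Polynomial ℝ) : Polynomial ℝ :=
  p.sum fun k a => C (a / (k + 1)) * X ^ (k + 1)

lemma derivative_antider (p : Polynomial ℝ) : derivative (antider p) = p := by
  unfold antider
  rw [Polynomial.sum, map_sum]
  conv_rhs => rw [← p.sum_C_mul_X_pow_eq]
  rw [Polynomial.sum]
  refine Finset.sum_congr rfl fun k hk => ?_
  rw [derivative_C_mul, derivative_X_pow]
  rw [← mul_assoc, ← C_mul]
  simp only [Nat.add_sub_cancel]
  congr 1
  have : ((k : ℝ) + 1) ≠ 0 := by positivity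
  push_cast
  field_simp

lemma natDegree_antider_le (p : Polynomial ℝ) : (antider p).natDegree ≤ p.natDegree + 1 := by
  unfold antider
  rw [Polynomial.sum]
  refine (natDegree_sum_le _ _).trans ?_
  rw [Finset.fold_max_le]
  refine ⟨Nat.zero_le _, fun k hk => ?_⟩
  refine (natDegree_C_mul_le _ _).trans ?_
  simp only [natDegree_X_pow]
  exact Nat.add_le_add_right (le_natDegree_of_mem_supp _ hk) 1

lemma integral_eval (p : Polynomial ℝ) (u v : ℝ) :
    ∫ t in u..v, p.eval t = (antider p).eval v - (antider p).eval u := by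
  have hd : ∀ x ∈ Set.uIcc u v, HasDerivAt (fun x => (antider p).eval x) (p.eval x) x := by
    intro x _
    have := (antider p).hasDerivAt x
    rwa [derivative_antider] at this
  exact intervalIntegral.integral_eq_sub_of_hasDerivAt hd
    ((Polynomial.continuous p).intervalIntegrable u v)

/-- explicit solution (and its uniqueness) of the first-order
Birkhoff-type interpolation problem with the constraint `a·p(-1) + b·p(1) = c_{M+1}`. -/
theorem stmt_16 (M : ℕ) (y : Fin (M + 1) → ℝ)
    (hy : StrictMono y) (hy0 : -1 ≤ y 0) (hyM : y (Fin.last M) ≤ 1)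
    (ℓ : Fin (M + 1) → Polynomial ℝ)
    (hdeg : ∀ j, (ℓ j).natDegree ≤ M)
    (hval : ∀ i j, (ℓ j).eval (y i) = if i = j then 1 else 0)
    (a b : ℝ) (hab : a + b ≠ 0)
    (c : Fin (M + 1) → ℝ) (cM1 : ℝ) :
    ∃ q : Polynomial ℝ,
      (∀ x : ℝ, q.eval x =
        (∑ j : Fin (M + 1), c j *
          ((∫ t in (-1 : ℝ)..x, (ℓ j).eval t) -
            (b / (a + b)) * ∫ t in (-1 : ℝ)..1, (ℓ j).eval t)) +
          cM1 / (a + b)) ∧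
      q.natDegree ≤ M + 1 ∧
      (∀ j, (Polynomial.derivative q).eval (y j) = c j) ∧
      (a * q.eval (-1) + b * q.eval 1 = cM1) ∧
      (∀ r : Polynomial ℝ, r.natDegree ≤ M + 1 →
        (∀ j, (Polynomial.derivative r).eval (y j) = c j) →
        a * r.eval (-1) + b * r.eval 1 = cM1 → r = q) := by
  classical
  set F : Fin (M + 1) → Polynomial ℝ := fun j => antider (ℓ j) with hF
  set q : Polynomial ℝ :=
    (∑ j : Fin (M + 1), C (c j) *
      (F j - C ((F j).eval (-1)) -
        C ((b / (a + b)) * ((F j).eval 1 - (F j).eval (-1))))) +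
    C (cM1 / (a + b)) with hq
  have heval : ∀ x : ℝ, q.eval x =
      (∑ j : Fin (M + 1), c j *
        ((∫ t in (-1 : ℝ)..x, (ℓ j).eval t) -
          (b / (a + b)) * ∫ t in (-1 : ℝ)..1, (ℓ j).eval t)) + cM1 / (a + b) := by
    intro x
    rw [hq]
    simp only [eval_add, eval_finset_sum, eval_mul, eval_sub, eval_C, integral_eval]
    rfl
  have hqdeg : q.natDegree ≤ M + 1 := by
    refine (natDegree_add_le _ _).trans (max_le ?_ ?_)
    · refine (natDegree_sum_le _ _).trans ?_
      rw [Finset.fold_max_le]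
      refine ⟨Nat.zero_le _, fun j _ => ?_⟩
      refine (natDegree_mul_le).trans ?_
      rw [natDegree_C, zero_add]
      refine (natDegree_sub_le _ _).trans (max_le ((natDegree_sub_le _ _).trans (max_le ?_ ?_)) ?_)
      · exact (natDegree_antider_le _).trans (Nat.add_le_add_right (hdeg j) 1)
      · rw [natDegree_C]; exact Nat.zero_le _
      · rw [natDegree_C]; exact Nat.zero_le _
    · rw [natDegree_C]; exact Nat.zero_le _
  have hqder : ∀ i, (derivative q).eval (y i) = c i := by
    intro i
    have hdq : derivative q = ∑ j : Fin (M + 1), C (c j) * ℓ j := by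
      rw [hq, map_add, derivative_C, add_zero, map_sum]
      refine Finset.sum_congr rfl fun j _ => ?_
      rw [derivative_C_mul, map_sub, map_sub, derivative_C, derivative_C, sub_zero, sub_zero,
        hF, derivative_antider]
    rw [hdq, eval_finset_sum]
    simp only [eval_mul, eval_C, hval]
    simp
  have hqbc : a * q.eval (-1) + b * q.eval 1 = cM1 := by
    rw [heval (-1), heval 1]
    simp only [intervalIntegral.integral_same]
    set I : Fin (M + 1) → ℝ := fun j => ∫ t in (-1 : ℝ)..1, (ℓ j).eval t with hI
    have key : ∀ j : Fin (M + 1),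
        a * (c j * ((0 : ℝ) - b / (a + b) * I j)) + b * (c j * (I j - b / (a + b) * I j)) = 0 := by
      intro j; field_simp; ring
    calc a * ((∑ j : Fin (M + 1), c j * (0 - b / (a + b) * I j)) + cM1 / (a + b)) +
          b * ((∑ j : Fin (M + 1), c j * (I j - b / (a + b) * I j)) + cM1 / (a + b))
        = (∑ j : Fin (M + 1),
            (a * (c j * ((0 : ℝ) - b / (a + b) * I j)) + b * (c j * (I j - b / (a + b) * I j)))) +
          (a + b) * (cM1 / (a + b)) := by
          rw [Finset.sum_add_distrib, ← Finset.mul_sum, ← Finset.mul_sum]; ring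
      _ = cM1 := by
          rw [Finset.sum_congr rfl fun j _ => key j]
          field_simp
          simp
  refine ⟨q, heval, hqdeg, hqder, hqbc, ?_⟩
  intro r hrdeg hrder hrbc
  have hd0 : derivative (r - q) = 0 := by
    refine Polynomial.eq_zero_of_natDegree_lt_card_of_eval_eq_zero _ hy.injective
      (fun j => ?_) ?_
    · rw [map_sub, eval_sub, hrder j, hqder j, sub_self]
    · calc (derivative (r - q)).natDegree ≤ (r - q).natDegree - 1 := natDegree_derivative_le _
        _ ≤ (M + 1) - 1 :=
            Nat.sub_le_sub_right ((natDegree_sub_le _ _).trans (max_le hrdeg hqdeg)) 1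
        _ < Fintype.card (Fin (M + 1)) := by simp
  obtain hC := Polynomial.eq_C_of_derivative_eq_zero hd0
  have hre : r = q + C ((r - q).coeff 0) := by rw [← hC]; ring
  have he0 : (r - q).coeff 0 = 0 := by
    have hx : a * r.eval (-1) + b * r.eval 1 =
        a * q.eval (-1) + b * q.eval 1 + (a + b) * (r - q).coeff 0 := by
      rw [hre]; simp; ring
    rw [hrbc, hqbc] at hx
    have h2 : (a + b) * (r - q).coeff 0 = 0 := by linarith
    exact (mul_eq_zero.mp h2).resolve_left hab
  rw [hre, he0, map_zero, add_zero]
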